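/- arXiv:math/0508110 — 4 statements merged into one kernel-verified Lean document; each statement's English description precedes it below -/
import Mathlib

section
/- For all integers k, ℓ ≥ 1 and r, s with r ≥ k, s ≥ 0 and r + s < k + ℓ, the coefficients f satisfy the recurrence f_{k+1,ℓ}^{r,s}(a) + f_{k,ℓ+1}^{r,s}(a) + (a_{k+1} + a_{ℓ+1}) f_{k,ℓ}^{r,s}(a) = 0, as an identity of polynomials in the parameters a_i. -/
open Finset

noncomputable section

/-- The polynomial ring `ℤ[a_2,a_3,…]`: the variable `j` is the parameter `a_{j+2}`. -/
abbrev ARing := MvPolynomial ℕ ℤ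

/-- The parameter `a_m` for `m ≥ 2`; `a_1 = 0`. -/
def av (m : ℕ) : ARing :=
  if 2 ≤ m then MvPolynomial.X (m - 2) else 0

/-- Elementary symmetric polynomial `e_j` in the parameters `a_m`, `m ∈ s`. -/
def esymA (s : Finset ℕ) (j : ℕ) : ARing :=
  ∑ t ∈ s.powersetCard j, ∏ m ∈ t, av m

/-- Complete homogeneous symmetric polynomial `h_m` in the parameters `a_i`, `i ∈ s`. -/
def hsymA (s : Finset ℕ) (m : ℕ) : ARing :=
  ∑ t ∈ s.sym m, ((t : Multiset ℕ).map av).prod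

/-- The coefficient `f_{k,ℓ}^{r,s}(a) = (−1)^{ℓ−s} Σ_{j=0}^{k+ℓ−r−s}
2 h_{k+ℓ−r−s−j}(a_{k+1},…,a_{r+1}) e_j(a_{s+2},…,a_ℓ)`. -/
def fco (k l r s : ℕ) : ARing :=
  (-1) ^ (l - s) *
    ∑ j ∈ range (k + l - r - s + 1),
      2 * hsymA (Icc (k + 1) (r + 1)) (k + l - r - s - j) * esymA (Icc (s + 2) l) j

lemma esymA_zero (S : Finset ℕ) : esymA S 0 = 1 := by
  simp [esymA]

lemma hsymA_zero (S : Finset ℕ) : hsymA S 0 = 1 := by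
  simp only [hsymA, Finset.sym_zero, Finset.sum_singleton]
  rfl

lemma esymA_insert {x : ℕ} {S : Finset ℕ} (hx : x ∉ S) (j : ℕ) :
    esymA (insert x S) (j+1) = esymA S (j+1) + av x * esymA S j := by
  unfold esymA
  rw [Finset.powersetCard_succ_insert hx, Finset.sum_union, Finset.sum_image, Finset.mul_sum]
  · congr 1
    refine Finset.sum_congr rfl fun t ht => ?_
    rw [Finset.prod_insert fun hxt => hx ((Finset.mem_powersetCard.1 ht).1 hxt)]
  · intro t ht u hu h
    have hxt : x ∉ t := fun hxt => hx ((Finset.mem_powersetCard.1 ht).1 hxt)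
    have hxu : x ∉ u := fun hxu => hx ((Finset.mem_powersetCard.1 hu).1 hxu)
    have := congrArg (fun v : Finset ℕ => v.erase x) h
    simpa [Finset.erase_insert hxt, Finset.erase_insert hxu] using this
  · rw [Finset.disjoint_left]
    intro t ht ht'
    obtain ⟨u, hu, rfl⟩ := Finset.mem_image.1 ht'
    exact hx ((Finset.mem_powersetCard.1 ht).1 (Finset.mem_insert_self x u))

lemma hsymA_insert {x : ℕ} {S : Finset ℕ} (hx : x ∉ S) (m : ℕ) :
    hsymA (insert x S) (m+1) = hsymA S (m+1) + av x * hsymA (insert x S) m := by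
  unfold hsymA
  rw [← Finset.sum_filter_add_sum_filter_not ((insert x S).sym (m+1)) (fun t => x ∈ t)]
  rw [add_comm]
  congr 1
  · refine Finset.sum_congr ?_ fun _ _ => rfl
    ext t
    simp only [Finset.mem_filter, Finset.mem_sym_iff, Finset.mem_insert]
    constructor
    · rintro ⟨h1, h2⟩ a ha
      rcases h1 a ha with rfl | h
      · exact absurd ha h2
      · exact h
    · intro h
      exact ⟨fun a ha => Or.inr (h a ha), fun hxt => hx (h x hxt)⟩
  · have hset : Finset.filter (fun t => x ∈ t) ((insert x S).sym (m+1))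
        = Finset.image (Sym.cons x) ((insert x S).sym m) := by
      ext t
      simp only [Finset.mem_filter, Finset.mem_image, Finset.mem_sym_iff]
      constructor
      · rintro ⟨h1, h2⟩
        obtain ⟨u, rfl⟩ := Sym.exists_cons_of_mem h2
        exact ⟨u, fun a ha => h1 a (Sym.mem_cons_of_mem ha), rfl⟩
      · rintro ⟨u, hu, rfl⟩
        constructor
        · intro a ha
          rcases Sym.mem_cons.1 ha with rfl | h
          · exact Finset.mem_insert_self _ _
          · exact hu a h
        · exact Sym.mem_cons_self x u
    rw [hset, Finset.sum_image (fun u _ v _ h => (Sym.cons_inj_right x u v).1 h),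
        Finset.mul_sum]
    refine Finset.sum_congr rfl fun u _ => ?_
    rw [Sym.coe_cons, Multiset.map_cons, Multiset.prod_cons]

lemma key_sum (H H' E E' : ℕ → ARing) (x y : ARing) (N : ℕ)
    (hH0 : H' 0 = H 0)
    (hH : ∀ m, H (m+1) = H' (m+1) + x * H m)
    (hE : ∀ j, E' (j+1) = E (j+1) + y * E j)
    (hE0 : E' 0 = E 0) :
    (∑ j ∈ range (N+2), 2 * H' (N+1-j) * E j)
      - (∑ j ∈ range (N+2), 2 * H (N+1-j) * E' j)
      + (x + y) * ∑ j ∈ range (N+1), 2 * H (N-j) * E j = 0 := by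
  have h1 : ∑ j ∈ range (N+2), 2 * H' (N+1-j) * E j
      = ∑ j ∈ range (N+2), 2 * H (N+1-j) * E j
        - x * ∑ j ∈ range (N+1), 2 * H (N-j) * E j := by
    rw [sum_range_succ, sum_range_succ (fun j => 2 * H (N+1-j) * E j)]
    rw [Finset.sum_congr rfl (fun j hj => by
      have hj' : N + 1 - j = (N - j) + 1 := by
        have := Finset.mem_range.1 hj; omega
      rw [hj', hH (N-j)]; ring :
      ∀ j ∈ range (N+1), 2 * H' (N+1-j) * E j
        = 2 * H (N+1-j) * E j - x * (2 * H (N-j) * E j))]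
    rw [Finset.sum_sub_distrib, Finset.mul_sum]
    simp only [Nat.sub_self, hH0]
    ring
  have h2 : ∑ j ∈ range (N+2), 2 * H (N+1-j) * E' j
      = ∑ j ∈ range (N+2), 2 * H (N+1-j) * E j
        + y * ∑ j ∈ range (N+1), 2 * H (N-j) * E j := by
    rw [Finset.sum_range_succ' (fun j => 2 * H (N+1-j) * E' j) (N+1),
        Finset.sum_range_succ' (fun j => 2 * H (N+1-j) * E j) (N+1)]
    rw [Finset.sum_congr rfl (fun j hj => by
      have h' : N + 1 - (j+1) = N - j := by omega
      rw [h', hE j]; ring :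
      ∀ j ∈ range (N+1), 2 * H (N+1-(j+1)) * E' (j+1)
        = 2 * H (N-j) * E (j+1) + y * (2 * H (N-j) * E j))]
    rw [Finset.sum_add_distrib, Finset.mul_sum]
    have h'' : ∀ j ∈ range (N+1), 2 * H (N+1-(j+1)) * E (j+1) = 2 * H (N-j) * E (j+1) := by
      intro j hj
      have : N + 1 - (j+1) = N - j := by omega
      rw [this]
    rw [Finset.sum_congr rfl h'']
    simp only [Nat.sub_zero, hE0]
    ring
  rw [h1, h2]; ring


/-- For `k, ℓ ≥ 1`, `r ≥ k`, `s ≥ 0` with `r + s < k + ℓ`: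
`f_{k+1,ℓ}^{r,s}(a) + f_{k,ℓ+1}^{r,s}(a) + (a_{k+1} + a_{ℓ+1}) f_{k,ℓ}^{r,s}(a) = 0`. -/
theorem fco_recurrence (k l r s : ℕ) (hk : 1 ≤ k) (hl : 1 ≤ l)
    (hr : k ≤ r) (hrs : r + s < k + l) :
    fco (k + 1) l r s + fco k (l + 1) r s + (av (k + 1) + av (l + 1)) * fco k l r s = 0 := by
  have hsl : s + 2 ≤ l + 1 := by omega
  set N := k + l - r - s with hNdef
  have e1 : k + 1 + l - r - s = N + 1 := by omega
  have e2 : k + (l + 1) - r - s = N + 1 := by omega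
  have e3 : l + 1 - s = (l - s) + 1 := by omega
  have hIccH : insert (k+1) (Icc (k+1+1) (r+1)) = Icc (k+1) (r+1) := by
    ext a; simp; omega
  have hxH : (k+1) ∉ Icc (k+1+1) (r+1) := by simp
  have hIccE : insert (l+1) (Icc (s+2) l) = Icc (s+2) (l+1) := by
    ext a; simp; omega
  have hxE : (l+1) ∉ Icc (s+2) l := by simp
  have hH : ∀ m, hsymA (Icc (k+1) (r+1)) (m+1)
      = hsymA (Icc (k+1+1) (r+1)) (m+1) + av (k+1) * hsymA (Icc (k+1) (r+1)) m := by
    intro m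
    have := hsymA_insert hxH m
    rwa [hIccH] at this
  have hE : ∀ j, esymA (Icc (s+2) (l+1)) (j+1)
      = esymA (Icc (s+2) l) (j+1) + av (l+1) * esymA (Icc (s+2) l) j := by
    intro j
    have := esymA_insert hxE j
    rwa [hIccE] at this
  have hkey := key_sum (hsymA (Icc (k+1) (r+1))) (hsymA (Icc (k+1+1) (r+1)))
    (esymA (Icc (s+2) l)) (esymA (Icc (s+2) (l+1))) (av (k+1)) (av (l+1)) N
    (by rw [hsymA_zero, hsymA_zero]) hH hE (by rw [esymA_zero, esymA_zero])
  unfold fco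
  rw [e1, e2, e3, pow_succ]
  linear_combination ((-1 : ARing)) ^ (l - s) * hkey


end
end

section
/- Let λ = (1^{e_1} 2^{e_2} ⋯ n^{e_n}) be a partition with all parts at most n that is not strict (i.e. e_k ≥ 2 for some k). Then in R_n, the monomial X^λ = X_1^{e_1} ⋯ X_n^{e_n} is an S-linear combination of the monomials X^μ with μ ∈ SP_n a strict partition satisfying μ ≺ λ in the graded reverse lexicographic order with X_1 ≺ X_2 ≺ ⋯ ≺ X_n. -/
open Finset

noncomputable section

/-- The coefficient ring `S = ℤ[x_1,…,x_n]`. -/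
abbrev Sring (n : ℕ) := MvPolynomial (Fin n) ℤ

/-- The polynomial ring `S[X_1,…,X_n]`; the variable of index `i : Fin n` is `X_{i+1}`. -/
abbrev PRing (n : ℕ) := MvPolynomial (Fin n) (Sring n)

/-- The substitution `ι_n : ℤ[a] → S` sending `a_j ↦ x_{n−j+2}` for `2 ≤ j ≤ n+1`
and `a_j ↦ 0` for `j > n+1` (0-indexed: variable `v`, i.e. `a_{v+2}`, goes to `x` with
0-indexed index `n−1−v` when `v < n`, and to `0` otherwise). -/
def iotaA (n : ℕ) : ARing →+* Sring n :=
  MvPolynomial.eval₂Hom (Int.castRingHom (Sring n))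
    (fun v => if h : v < n then MvPolynomial.X (⟨n - 1 - v, by omega⟩ : Fin n) else 0)

/-- The generator `X_k` of `S[X_1,…,X_n]` for `1 ≤ k ≤ n`, with the conventions
`X_0 = 1` and `X_j = 0` for `j > n`. -/
def XV (n : ℕ) (k : ℕ) : PRing n :=
  if h0 : k = 0 then 1
  else if h : k ≤ n then MvPolynomial.X (⟨k - 1, by omega⟩ : Fin n) else 0

/-- The relation `X_{k,k} = X_k² + 2 Σ_{i=1}^{min(n−k,k)} (−1)^i X_{k+i}X_{k−i}
+ Σ_{r=k}^{min(n,2k−1)} Σ_{s=0}^{2k−1−r} ι_n(f_{k,k}^{r,s}(a)) X_r X_s`. -/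
def XKK (n k : ℕ) : PRing n :=
  XV n k ^ 2 +
    2 * ∑ i ∈ Icc 1 (min (n - k) k), (-1) ^ i * XV n (k + i) * XV n (k - i) +
    ∑ r ∈ Icc k (min n (2 * k - 1)), ∑ s ∈ range (2 * k - 1 - r + 1),
      MvPolynomial.C (iotaA n (fco k k r s)) * XV n r * XV n s

/-- The ideal `I_n = ⟨X_{1,1},…,X_{n,n}⟩` of `S[X_1,…,X_n]`. -/
def Irel (n : ℕ) : Ideal (PRing n) :=
  Ideal.span ((fun k => XKK n k) '' Set.Icc 1 n)

/-- For a partition `λ = (1^{e_1} ⋯ n^{e_n})` encoded by its exponent vector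
`e : Fin n → ℕ` (the part `i+1` has multiplicity `e i`), the monomial
`X^λ = X_1^{e_1} ⋯ X_n^{e_n}`. -/
def Xmon (n : ℕ) (e : Fin n → ℕ) : PRing n :=
  ∏ i : Fin n, MvPolynomial.X i ^ e i

/-- The exponent vector of the squarefree monomial `X^μ` attached to a strict partition
`μ ∈ SP_n`, encoded by the set of its parts `μ : Fin n → Bool` (`μ i = true` iff `i+1`
is a part). -/
def strictExp (n : ℕ) (μ : Fin n → Bool) : Fin n → ℕ :=
  fun i => if μ i then 1 else 0

/-- The graded reverse lexicographic order with `X_1 ≺ X_2 ≺ ⋯ ≺ X_n` on exponent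
vectors: `e' ≺ e` iff the total degree of `e'` is smaller, or the degrees are equal and
at the smallest index where they differ, `e'` has the strictly larger exponent. -/
def grevlexLt (n : ℕ) (e' e : Fin n → ℕ) : Prop :=
  (∑ i : Fin n, e' i < ∑ i : Fin n, e i) ∨
    ((∑ i : Fin n, e' i = ∑ i : Fin n, e i) ∧
      ∃ k : Fin n, (∀ i : Fin n, i < k → e' i = e i) ∧ e k < e' k)

/-! ### Auxiliary development -/

namespace NSMR

open MvPolynomial

/-- total degree of an exponent vector -/
def dg (n : ℕ) (e : Fin n → ℕ) : ℕ := ∑ i, e i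

lemma le_dg {n : ℕ} (e : Fin n → ℕ) (i : Fin n) : e i ≤ dg n e :=
  Finset.single_le_sum (fun j _ => Nat.zero_le (e j)) (Finset.mem_univ i)

/-- the measure for well-founded induction -/
def meas (n : ℕ) (e : Fin n → ℕ) : ℕ ×ₗ Lex (Fin n → ℕ) :=
  toLex (dg n e, toLex fun i => dg n e - e i)

lemma meas_lt {n : ℕ} {e' e : Fin n → ℕ} (h : grevlexLt n e' e) : meas n e' < meas n e := by
  rw [meas, meas, Prod.Lex.lt_iff]
  rcases h with h | ⟨hd, k, hpre, hk⟩
  · exact Or.inl h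
  · refine Or.inr ⟨hd, ?_⟩
    show Pi.Lex (· < ·) (· < ·) _ _
    refine ⟨k, fun j hj => ?_, ?_⟩
    · show (∑ i, e' i) - e' j = (∑ i, e i) - e j
      rw [hpre j hj, hd]
    have h1 : e' k ≤ ∑ i, e' i := le_dg e' k
    show (∑ i, e' i) - e' k < (∑ i, e i) - e k
    omega

lemma grevlex_trans {n : ℕ} {a b c : Fin n → ℕ}
    (h1 : grevlexLt n a b) (h2 : grevlexLt n b c) : grevlexLt n a c := by
  rcases h1 with h1 | ⟨hd1, k1, hp1, hk1⟩
  · rcases h2 with h2 | ⟨hd2, _⟩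
    · exact Or.inl (h1.trans h2)
    · exact Or.inl (hd2 ▸ h1)
  · rcases h2 with h2 | ⟨hd2, k2, hp2, hk2⟩
    · exact Or.inl (hd1 ▸ h2)
    · refine Or.inr ⟨hd1.trans hd2, ?_⟩
      rcases lt_trichotomy k1 k2 with hlt | heq | hgt
      · exact ⟨k1, fun i hi => (hp1 i hi).trans (hp2 i (hi.trans hlt)),
          by rw [← hp2 k1 hlt]; exact hk1⟩
      · exact ⟨k1, fun i hi => (hp1 i hi).trans (hp2 i (heq ▸ hi)),
          lt_trans (heq ▸ hk2) hk1⟩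
      · exact ⟨k2, fun i hi => (hp1 i (hi.trans hgt)).trans (hp2 i hi),
          by rw [hp1 k2 hgt]; exact hk2⟩

lemma grevlex_add_right {n : ℕ} {a b : Fin n → ℕ} (c : Fin n → ℕ)
    (h : grevlexLt n a b) : grevlexLt n (a + c) (b + c) := by
  have hsum : ∀ x : Fin n → ℕ, (∑ i, (x + c) i) = (∑ i, x i) + (∑ i, c i) := by
    intro x; simp [Finset.sum_add_distrib]
  rcases h with h | ⟨hd, k, hp, hk⟩
  · exact Or.inl (by rw [hsum, hsum]; omega)
  · refine Or.inr ⟨by rw [hsum, hsum, hd], k, fun i hi => ?_, ?_⟩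
    · show a i + c i = b i + c i
      rw [hp i hi]
    · show b k + c k < a k + c k
      omega

/-- the exponent vector of `XV n a` (for `a ≤ n`). -/
def vec (n : ℕ) (a : ℕ) : Fin n → ℕ :=
  if h : 1 ≤ a ∧ a ≤ n then Pi.single (⟨a - 1, by omega⟩ : Fin n) 1 else 0

lemma Xmon_add (n : ℕ) (e f : Fin n → ℕ) : Xmon n (e + f) = Xmon n e * Xmon n f := by
  rw [Xmon, Xmon, Xmon, ← Finset.prod_mul_distrib]
  exact Finset.prod_congr rfl fun i _ => by rw [Pi.add_apply, pow_add]

lemma Xmon_single (n : ℕ) (i : Fin n) (m : ℕ) :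
    Xmon n (Pi.single i m) = MvPolynomial.X i ^ m := by
  rw [Xmon, Finset.prod_eq_single i]
  · rw [Pi.single_eq_same]
  · intro j _ hj; rw [Pi.single_eq_of_ne hj, pow_zero]
  · intro h; exact absurd (Finset.mem_univ i) h

lemma Xmon_zero (n : ℕ) : Xmon n 0 = 1 := by
  rw [Xmon]; simp

lemma XV_eq_Xmon {n a : ℕ} (h : a ≤ n) : XV n a = Xmon n (vec n a) := by
  rcases Nat.eq_zero_or_pos a with h0 | h1
  · subst h0
    rw [XV, vec]
    simp [Xmon_zero]
  · rw [XV, vec, dif_neg (by omega), dif_pos h, dif_pos ⟨h1, h⟩, Xmon_single, pow_one]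

lemma sum_vec {n a : ℕ} (h1 : 1 ≤ a) (h2 : a ≤ n) : (∑ i, vec n a i) = 1 := by
  rw [vec, dif_pos ⟨h1, h2⟩]
  simp [Finset.sum_pi_single']

lemma sum_vec_zero (n : ℕ) : (∑ i, vec n 0 i) = 0 := by
  rw [vec, dif_neg (by omega)]; simp

/-- the key grevlex inequality for the terms of the relation `X_{k,k}` -/
lemma step_lt {n : ℕ} (k : Fin n) {r s : ℕ} (hr1 : k.1 + 1 ≤ r) (hrn : r ≤ n)
    (hs : s ≤ k.1) : grevlexLt n (vec n r + vec n s) ((Pi.single k 2 : Fin n → ℕ)) := by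
  have hsum2 : (∑ i, (Pi.single k 2 : Fin n → ℕ) i) = 2 := by simp [Finset.sum_pi_single']
  have hr0 : 1 ≤ r := by omega
  rcases Nat.eq_zero_or_pos s with h0 | h1
  · subst h0
    left
    rw [hsum2]
    have : (∑ i, (vec n r + vec n 0) i) = 1 := by
      simp only [Pi.add_apply, Finset.sum_add_distrib]
      rw [sum_vec hr0 hrn, sum_vec_zero]
    omega
  · have hsn : s ≤ n := le_trans hs (le_of_lt k.2)
    right
    constructor
    · rw [hsum2]
      simp only [Pi.add_apply, Finset.sum_add_distrib]
      rw [sum_vec hr0 hrn, sum_vec h1 hsn]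
    · refine ⟨⟨s - 1, by omega⟩, fun i hi => ?_, ?_⟩
      · have hik : i.1 < s - 1 := hi
        have h1' : (Pi.single k 2 : Fin n → ℕ) i = 0 :=
          Pi.single_eq_of_ne (by intro hik'; rw [hik'] at hi; omega) 2
        have h2' : vec n r i = 0 := by
          rw [vec, dif_pos ⟨hr0, hrn⟩]
          exact Pi.single_eq_of_ne (by
            intro hh
            have : i.1 = r - 1 := congrArg Fin.val hh
            omega) 1
        have h3' : vec n s i = 0 := by
          rw [vec, dif_pos ⟨h1, hsn⟩]
          exact Pi.single_eq_of_ne (by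
            intro hh
            have : i.1 = s - 1 := congrArg Fin.val hh
            omega) 1
        show vec n r i + vec n s i = (Pi.single k 2 : Fin n → ℕ) i
        rw [h1', h2', h3']
      · have h1' : (Pi.single k 2 : Fin n → ℕ) ⟨s - 1, by omega⟩ = 0 :=
          Pi.single_eq_of_ne (by
            intro hh
            have : s - 1 = k.1 := congrArg Fin.val hh
            omega) 2
        have h2' : vec n s ⟨s - 1, by omega⟩ = 1 := by
          rw [vec, dif_pos ⟨h1, hsn⟩]
          exact Pi.single_eq_same _ _
        show (Pi.single k 2 : Fin n → ℕ) _ < vec n r _ + vec n s _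
        rw [h1', h2']
        omega

/-- the set of admissible strict exponents -/
def Ok (n : ℕ) (e : Fin n → ℕ) : Set (Fin n → Bool) :=
  {μ | grevlexLt n (strictExp n μ) e ∨ strictExp n μ = e}

def qmon (n : ℕ) (e : Fin n → ℕ) : PRing n ⧸ Irel n :=
  Ideal.Quotient.mk (Irel n) (Xmon n e)

def SpanE (n : ℕ) (e : Fin n → ℕ) : Submodule (Sring n) (PRing n ⧸ Irel n) :=
  Submodule.span (Sring n) ((fun μ => qmon n (strictExp n μ)) '' Ok n e)

lemma Ok_mono {n : ℕ} {e' e : Fin n → ℕ} (h : grevlexLt n e' e) : Ok n e' ⊆ Ok n e := by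
  intro μ hμ
  rcases hμ with hμ | hμ
  · exact Or.inl (grevlex_trans hμ h)
  · exact Or.inl (hμ ▸ h)

lemma SpanE_mono {n : ℕ} {e' e : Fin n → ℕ} (h : grevlexLt n e' e) :
    SpanE n e' ≤ SpanE n e :=
  Submodule.span_mono (Set.image_mono (Ok_mono h))

lemma mk_C_mul (n : ℕ) (c : Sring n) (y : PRing n) :
    Ideal.Quotient.mk (Irel n) (MvPolynomial.C c * y) =
      c • Ideal.Quotient.mk (Irel n) y := by
  rw [map_mul, Algebra.smul_def c (Ideal.Quotient.mk (Irel n) y)]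
  rfl

lemma XKK_mem {n k : ℕ} (h1 : 1 ≤ k) (h2 : k ≤ n) : XKK n k ∈ Irel n :=
  Ideal.subset_span ⟨k, ⟨h1, h2⟩, rfl⟩

set_option maxHeartbeats 2000000 in
set_option synthInstance.maxHeartbeats 1000000 in
/-- main span lemma, by well-founded induction -/
lemma main_span (n : ℕ) : ∀ e : Fin n → ℕ, qmon n e ∈ SpanE n e := by
  have wf : WellFounded (fun e' e : Fin n → ℕ => meas n e' < meas n e) :=
    InvImage.wf _ (IsWellFounded.wf)
  intro e
  induction e using wf.induction with
  | _ e IH =>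
  by_cases hstrict : ∀ i, e i ≤ 1
  · -- e is already strict
    classical
    set μ : Fin n → Bool := fun i => decide (e i = 1) with hμ
    have hse : strictExp n μ = e := by
      funext i
      have := hstrict i
      rw [strictExp, hμ]
      by_cases h : e i = 1 <;> simp [h] <;> omega
    exact Submodule.subset_span ⟨μ, Or.inr hse, by
      show qmon n (strictExp n μ) = qmon n e
      rw [hse]⟩
  · push_neg at hstrict
    obtain ⟨k, hk⟩ := hstrict
    have hk2 : 2 ≤ e k := hk
    set K : ℕ := k.1 + 1 with hK
    have hKn : K ≤ n := k.2
    set e₀ : Fin n → ℕ := fun i => e i - (Pi.single k 2 : Fin n → ℕ) i with he₀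
    have hesplit : e = (Pi.single k 2 : Fin n → ℕ) + e₀ := by
      funext i
      show e i = (Pi.single k 2 : Fin n → ℕ) i + e₀ i
      have he₀i : e₀ i = e i - (Pi.single k 2 : Fin n → ℕ) i := rfl
      by_cases h : i = k
      · subst h
        rw [he₀i, Pi.single_eq_same]
        omega
      · rw [he₀i, Pi.single_eq_of_ne h]
        omega
    -- the PRing identity
    have hXk : MvPolynomial.X k = XV n K := by
      rw [XV, dif_neg (by omega), dif_pos hKn]
      congr 1
    have hmon : Xmon n e = XV n K ^ 2 * Xmon n e₀ := by
      rw [hesplit, Xmon_add, Xmon_single, hXk]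
    have hid : Xmon n e =
        XKK n K * Xmon n e₀
        - (2 * ∑ i ∈ Icc 1 (min (n - K) K), (-1) ^ i * XV n (K + i) * XV n (K - i)) * Xmon n e₀
        - (∑ r ∈ Icc K (min n (2 * K - 1)), ∑ s ∈ range (2 * K - 1 - r + 1),
            MvPolynomial.C (iotaA n (fco K K r s)) * XV n r * XV n s) * Xmon n e₀ := by
      rw [hmon, XKK]
      ring
    -- pass to the quotient
    have hq : qmon n e =
        - Ideal.Quotient.mk (Irel n)
            ((2 * ∑ i ∈ Icc 1 (min (n - K) K), (-1) ^ i * XV n (K + i) * XV n (K - i)) * Xmon n e₀)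
        - Ideal.Quotient.mk (Irel n)
            ((∑ r ∈ Icc K (min n (2 * K - 1)), ∑ s ∈ range (2 * K - 1 - r + 1),
              MvPolynomial.C (iotaA n (fco K K r s)) * XV n r * XV n s) * Xmon n e₀) := by
      rw [qmon, hid]
      rw [map_sub, map_sub]
      have h0 : Ideal.Quotient.mk (Irel n) (XKK n K * Xmon n e₀) = 0 := by
        rw [Ideal.Quotient.eq_zero_iff_mem]
        exact Ideal.mul_mem_right _ _ (XKK_mem (by omega) hKn)
      rw [h0]
      ring
    -- a generic term lemma
    have hterm : ∀ (c : Sring n) (r s : ℕ), K ≤ r → r ≤ n → s ≤ k.1 →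
        Ideal.Quotient.mk (Irel n) (MvPolynomial.C c * (XV n r * XV n s * Xmon n e₀))
          ∈ SpanE n e := by
      intro c r s hr hrn hs
      have hsn : s ≤ n := le_trans hs (by omega)
      have heq : XV n r * XV n s * Xmon n e₀ = Xmon n (vec n r + vec n s + e₀) := by
        rw [XV_eq_Xmon hrn, XV_eq_Xmon hsn, Xmon_add, Xmon_add]
      rw [heq, mk_C_mul]
      have hlt : grevlexLt n (vec n r + vec n s + e₀) e := by
        rw [hesplit]
        exact grevlex_add_right e₀ (step_lt k (by omega) hrn hs)
      exact Submodule.smul_mem _ _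
        (SpanE_mono hlt (IH _ (meas_lt hlt)))
    -- handle the two sums
    rw [hq]
    refine sub_mem (neg_mem ?_) ?_
    · rw [Finset.mul_sum, Finset.sum_mul, map_sum]
      refine Submodule.sum_mem _ fun i hi => ?_
      rw [Finset.mem_Icc] at hi
      have hterm' := hterm ((-1) ^ i * 2) (K + i) (K - i) (by omega)
        (by omega) (by omega)
      have hC : (MvPolynomial.C ((-1 : Sring n) ^ i * 2) : PRing n) = (-1) ^ i * 2 := by
        rw [map_mul, map_pow, map_neg, map_one,
          show (2 : Sring n) = 1 + 1 by norm_num, map_add, map_one]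
        norm_num
      have : 2 * ((-1) ^ i * XV n (K + i) * XV n (K - i)) * Xmon n e₀ =
          MvPolynomial.C ((-1 : Sring n) ^ i * 2) * (XV n (K + i) * XV n (K - i) * Xmon n e₀) := by
        rw [hC]; ring
      rw [this]
      exact hterm'
    · rw [Finset.sum_mul, map_sum]
      refine Submodule.sum_mem _ fun r hr => ?_
      rw [Finset.sum_mul, map_sum]
      refine Submodule.sum_mem _ fun s hs => ?_
      rw [Finset.mem_Icc] at hr
      rw [Finset.mem_range] at hs
      have hrK : K ≤ r := hr.1
      have hrn : r ≤ n := le_trans hr.2 (min_le_left _ _)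
      have hsk : s ≤ k.1 := by omega
      have : MvPolynomial.C (iotaA n (fco K K r s)) * XV n r * XV n s * Xmon n e₀ =
          MvPolynomial.C (iotaA n (fco K K r s)) * (XV n r * XV n s * Xmon n e₀) := by ring
      rw [this]
      exact hterm _ r s hrK hrn hsk

end NSMR

/-- Let `λ = (1^{e_1} ⋯ n^{e_n})` be a partition with all parts at most `n` that is not
strict (`e_k ≥ 2` for some `k`).  Then in `R_n = S[X_1,…,X_n]/I_n`, the monomial `X^λ`
is an `S`-linear combination of the monomials `X^μ` with `μ ∈ SP_n` strict and
`μ ≺ λ` in the graded reverse lexicographic order with `X_1 ≺ ⋯ ≺ X_n`. -/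
theorem nonstrict_monomial_reduction (n : ℕ) (hn : 1 ≤ n) (e : Fin n → ℕ)
    (he : ∃ k : Fin n, 2 ≤ e k) :
    ∃ c : (Fin n → Bool) → Sring n,
      Ideal.Quotient.mk (Irel n) (Xmon n e) =
        ∑ μ : Fin n → Bool,
          algebraMap (Sring n) (PRing n ⧸ Irel n) (c μ) *
            Ideal.Quotient.mk (Irel n) (Xmon n (strictExp n μ)) ∧
      ∀ μ : Fin n → Bool, c μ ≠ 0 → grevlexLt n (strictExp n μ) e := by
  classical
  have hmem := NSMR.main_span n e
  rw [NSMR.SpanE, Finsupp.mem_span_image_iff_linearCombination] at hmem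
  obtain ⟨l, hsupp, hl⟩ := hmem
  refine ⟨fun μ => l μ, ?_, ?_⟩
  · have hl' : (Finsupp.linearCombination (Sring n)
        (fun μ => NSMR.qmon n (strictExp n μ))) l = Ideal.Quotient.mk (Irel n) (Xmon n e) := hl
    rw [← hl', Finsupp.linearCombination_apply, Finsupp.sum]
    rw [Finset.sum_subset (Finset.subset_univ l.support)]
    · refine Finset.sum_congr rfl fun μ _ => ?_
      rw [Algebra.smul_def (l μ) (NSMR.qmon n (strictExp n μ))]
      rfl
    · intro μ _ hμ
      rw [Finsupp.notMem_support_iff] at hμ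
      rw [hμ, zero_smul]
  · intro μ hμ
    have hμs : μ ∈ l.support := Finsupp.mem_support_iff.mpr hμ
    have hok : μ ∈ NSMR.Ok n e := hsupp hμs
    rcases hok with h | h
    · exact h
    · exfalso
      obtain ⟨k, hk⟩ := he
      have := congrFun h k
      rw [strictExp] at this
      by_cases hb : μ k <;> simp [hb] at this <;> omega


end
end

section
/- The monomials X^λ for λ ∈ SP_n generate R_n as a module over S = ℤ[x_1,…,x_n]. -/
open Finset

noncomputable section

def bumpE (n : ℕ) (e : Fin n → ℕ) (k : Fin n) (m : ℕ) : Fin n → ℕ :=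
  fun i => e i + if i = k then m else 0

def degE (n : ℕ) (e : Fin n → ℕ) : ℕ := ∑ i, e i

def wtE (n : ℕ) (e : Fin n → ℕ) : ℕ := ∏ i : Fin n, ((i : ℕ) + 1) ^ e i

lemma Xmon_bump {n : ℕ} (e : Fin n → ℕ) (k : Fin n) (m : ℕ) :
    Xmon n (bumpE n e k m) = Xmon n e * MvPolynomial.X k ^ m := by
  unfold Xmon bumpE
  simp only [pow_add]
  rw [Finset.prod_mul_distrib]
  congr 1
  rw [show (fun i : Fin n => MvPolynomial.X (R := Sring n) i ^ (if i = k then m else 0))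
      = fun i => if i = k then MvPolynomial.X k ^ m else 1 from
    funext fun i => by split <;> simp_all]
  simp

lemma degE_bump {n : ℕ} (e : Fin n → ℕ) (k : Fin n) (m : ℕ) :
    degE n (bumpE n e k m) = degE n e + m := by
  unfold degE bumpE
  rw [Finset.sum_add_distrib]
  simp

lemma wtE_bump {n : ℕ} (e : Fin n → ℕ) (k : Fin n) (m : ℕ) :
    wtE n (bumpE n e k m) = wtE n e * ((k : ℕ) + 1) ^ m := by
  unfold wtE bumpE
  simp only [pow_add]
  rw [Finset.prod_mul_distrib]
  congr 1
  rw [show (fun i : Fin n => ((i : ℕ) + 1) ^ (if i = k then m else 0))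
      = fun i => if i = k then ((k : ℕ) + 1) ^ m else 1 from
    funext fun i => by split <;> simp_all]
  simp

lemma wtE_pos {n : ℕ} (e : Fin n → ℕ) : 0 < wtE n e :=
  Finset.prod_pos fun i _ => pow_pos (Nat.succ_pos _) _

lemma mk_C_mul {n : ℕ} (I : Ideal (PRing n)) (c : Sring n) (y : PRing n) :
    Ideal.Quotient.mk I (MvPolynomial.C c * y) = c • Ideal.Quotient.mk I y := by
  rw [← MvPolynomial.smul_eq_C_mul, ← Ideal.Quotient.mkₐ_eq_mk (Sring n), map_smul]

set_option maxHeartbeats 1000000 in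
set_option synthInstance.maxHeartbeats 400000 in
/-- The monomials `X^λ` for `λ ∈ SP_n` (strict partitions, encoded by their sets of
parts `μ : Fin n → Bool`) generate `R_n = S[X_1,…,X_n]/I_n` as a module over
`S = ℤ[x_1,…,x_n]`. -/
theorem strict_monomials_span (n : ℕ) (hn : 1 ≤ n) :
    Submodule.span (Sring n)
        (Set.range fun μ : Fin n → Bool =>
          Ideal.Quotient.mk (Irel n) (Xmon n (strictExp n μ))) = ⊤ := by
  set N := Submodule.span (Sring n)
      (Set.range fun μ : Fin n → Bool =>
        Ideal.Quotient.mk (Irel n) (Xmon n (strictExp n μ))) with hN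
  have key : ∀ e : Fin n → ℕ, Ideal.Quotient.mk (Irel n) (Xmon n e) ∈ N := by
    suffices H : ∀ d w (e : Fin n → ℕ), degE n e = d → wtE n e = w →
        Ideal.Quotient.mk (Irel n) (Xmon n e) ∈ N by
      intro e; exact H _ _ e rfl rfl
    intro d
    induction d using Nat.strong_induction_on with
    | _ d ihd =>
    intro w
    induction w using Nat.strong_induction_on with
    | _ w ihw =>
    intro e hde hwe
    by_cases hsq : ∀ i, e i ≤ 1
    · rw [hN]
      apply Submodule.subset_span
      have hμ : strictExp n (fun i => e i == 1) = e := by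
        funext i
        have h1 := hsq i
        by_cases h : e i = 1
        · simp [strictExp, h]
        · have h0 : e i = 0 := by omega
          simp [strictExp, h0]
      exact ⟨fun i => e i == 1, by simp only [hμ]⟩
    · push_neg at hsq
      obtain ⟨k, hk⟩ := hsq
      have hIH : ∀ e' : Fin n → ℕ, (degE n e' < degE n e ∨
          (degE n e' = degE n e ∧ wtE n e' < wtE n e)) →
          Ideal.Quotient.mk (Irel n) (Xmon n e') ∈ N := by
        intro e' h
        rcases h with h | ⟨h1, h2⟩
        · exact ihd (degE n e') (by omega) (wtE n e') e' rfl rfl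
        · exact ihw (wtE n e') (by omega) e' (by omega) rfl
      have hKn : (k : ℕ) + 1 ≤ n := k.isLt
      obtain ⟨e₀, hee⟩ : ∃ e₀, e = bumpE n e₀ k 2 :=
        ⟨fun i => e i - if i = k then 2 else 0,
          funext fun i => by by_cases h : i = k <;> simp [bumpE, h] <;> omega⟩
      have hXe : Xmon n e = Xmon n e₀ * MvPolynomial.X k ^ 2 := by
        rw [hee]; exact Xmon_bump e₀ k 2
      have hdeg2 : degE n e = degE n e₀ + 2 := by rw [hee, degE_bump]
      have hwt2 : wtE n e = wtE n e₀ * (((k : ℕ) + 1) * ((k : ℕ) + 1)) := by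
        rw [hee, wtE_bump, pow_two]
      have hXV : XV n ((k : ℕ) + 1) = MvPolynomial.X k := by
        unfold XV
        rw [dif_neg (by omega), dif_pos hKn]
        congr 1
      have hXKKmem : XKK n ((k : ℕ) + 1) ∈ Irel n :=
        Ideal.subset_span ⟨(k : ℕ) + 1, ⟨by omega, hKn⟩, rfl⟩
      have h0 : Ideal.Quotient.mk (Irel n) (Xmon n e₀ * XKK n ((k : ℕ) + 1)) = 0 :=
        Ideal.Quotient.eq_zero_iff_mem.2 (Ideal.mul_mem_left _ _ hXKKmem)
      -- the step lemma
      have hstep : ∀ a b : ℕ, 1 ≤ a →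
          (b = 0 ∨ (1 ≤ b ∧ b ≤ n ∧ a * b < ((k : ℕ) + 1) * ((k : ℕ) + 1))) →
          Ideal.Quotient.mk (Irel n) (Xmon n e₀ * (XV n a * XV n b)) ∈ N := by
        intro a b ha hb
        by_cases han : a ≤ n
        · obtain ⟨fa, hfa⟩ : ∃ fa : Fin n, (fa : ℕ) = a - 1 := ⟨⟨a - 1, by omega⟩, rfl⟩
          have hXa : XV n a = MvPolynomial.X fa := by
            unfold XV
            rw [dif_neg (by omega), dif_pos han]
            congr 1
            exact Fin.ext hfa.symm
          rcases hb with rfl | ⟨hb1, hbn, hab⟩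
          · have hXb : XV n 0 = 1 := by unfold XV; rw [dif_pos rfl]
            have heq : Xmon n e₀ * (XV n a * XV n 0) = Xmon n (bumpE n e₀ fa 1) := by
              rw [hXa, hXb, Xmon_bump]; ring
            rw [heq]
            apply hIH
            left
            rw [degE_bump, hdeg2]
            omega
          · obtain ⟨fb, hfb⟩ : ∃ fb : Fin n, (fb : ℕ) = b - 1 := ⟨⟨b - 1, by omega⟩, rfl⟩
            have hXb : XV n b = MvPolynomial.X fb := by
              unfold XV
              rw [dif_neg (by omega), dif_pos hbn]
              congr 1
              exact Fin.ext hfb.symm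
            have heq : Xmon n e₀ * (XV n a * XV n b)
                = Xmon n (bumpE n (bumpE n e₀ fa 1) fb 1) := by
              rw [hXa, hXb, Xmon_bump, Xmon_bump]; ring
            rw [heq]
            apply hIH
            right
            constructor
            · rw [degE_bump, degE_bump, hdeg2]
            · rw [wtE_bump, wtE_bump, hfa, hfb, pow_one, pow_one]
              have h1 : a - 1 + 1 = a := by omega
              have h2 : b - 1 + 1 = b := by omega
              rw [h1, h2, hwt2, mul_assoc]
              exact mul_lt_mul_of_pos_left hab (wtE_pos e₀)
        · have hXa : XV n a = 0 := by unfold XV; rw [dif_neg (by omega), dif_neg han]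
          rw [hXa, zero_mul, mul_zero, map_zero]
          exact zero_mem N
      -- expansion of the relation
      have e1 : Xmon n e₀ * (2 * ∑ i ∈ Icc 1 (min (n - ((k : ℕ) + 1)) ((k : ℕ) + 1)),
            (-1) ^ i * XV n ((k : ℕ) + 1 + i) * XV n ((k : ℕ) + 1 - i))
          = ∑ i ∈ Icc 1 (min (n - ((k : ℕ) + 1)) ((k : ℕ) + 1)),
            ((2 * (-1) ^ i : ℤ) : PRing n)
              * (Xmon n e₀ * (XV n ((k : ℕ) + 1 + i) * XV n ((k : ℕ) + 1 - i))) := by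
        simp only [Finset.mul_sum]
        exact Finset.sum_congr rfl fun i _ => by push_cast; ring
      have e2 : Xmon n e₀ * ∑ r ∈ Icc ((k : ℕ) + 1) (min n (2 * ((k : ℕ) + 1) - 1)),
            ∑ s ∈ range (2 * ((k : ℕ) + 1) - 1 - r + 1),
              MvPolynomial.C (iotaA n (fco ((k : ℕ) + 1) ((k : ℕ) + 1) r s)) * XV n r * XV n s
          = ∑ r ∈ Icc ((k : ℕ) + 1) (min n (2 * ((k : ℕ) + 1) - 1)),
            ∑ s ∈ range (2 * ((k : ℕ) + 1) - 1 - r + 1),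
              MvPolynomial.C (iotaA n (fco ((k : ℕ) + 1) ((k : ℕ) + 1) r s))
                * (Xmon n e₀ * (XV n r * XV n s)) := by
        simp only [Finset.mul_sum]
        exact Finset.sum_congr rfl fun r _ => Finset.sum_congr rfl fun s _ => by ring
      have expand : Xmon n e₀ * XKK n ((k : ℕ) + 1) = Xmon n e +
          ((∑ i ∈ Icc 1 (min (n - ((k : ℕ) + 1)) ((k : ℕ) + 1)),
            ((2 * (-1) ^ i : ℤ) : PRing n)
              * (Xmon n e₀ * (XV n ((k : ℕ) + 1 + i) * XV n ((k : ℕ) + 1 - i))))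
          + ∑ r ∈ Icc ((k : ℕ) + 1) (min n (2 * ((k : ℕ) + 1) - 1)),
            ∑ s ∈ range (2 * ((k : ℕ) + 1) - 1 - r + 1),
              MvPolynomial.C (iotaA n (fco ((k : ℕ) + 1) ((k : ℕ) + 1) r s))
                * (Xmon n e₀ * (XV n r * XV n s))) := by
        rw [hXe]
        unfold XKK
        rw [hXV, mul_add, mul_add, e1, e2]
        ring
      have hsum : Ideal.Quotient.mk (Irel n) (Xmon n e)
          = -(Ideal.Quotient.mk (Irel n)
              (∑ i ∈ Icc 1 (min (n - ((k : ℕ) + 1)) ((k : ℕ) + 1)),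
                ((2 * (-1) ^ i : ℤ) : PRing n)
                  * (Xmon n e₀ * (XV n ((k : ℕ) + 1 + i) * XV n ((k : ℕ) + 1 - i))))
            + Ideal.Quotient.mk (Irel n)
              (∑ r ∈ Icc ((k : ℕ) + 1) (min n (2 * ((k : ℕ) + 1) - 1)),
                ∑ s ∈ range (2 * ((k : ℕ) + 1) - 1 - r + 1),
                  MvPolynomial.C (iotaA n (fco ((k : ℕ) + 1) ((k : ℕ) + 1) r s))
                    * (Xmon n e₀ * (XV n r * XV n s)))) := by
        apply eq_neg_of_add_eq_zero_left
        rw [← map_add, ← map_add, ← expand]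
        exact h0
      rw [hsum]
      apply neg_mem
      apply add_mem
      · rw [map_sum]
        apply Submodule.sum_mem
        intro i hi
        rw [Finset.mem_Icc] at hi
        rw [map_mul, map_intCast, ← zsmul_eq_mul]
        apply zsmul_mem
        apply hstep _ _ (by omega)
        by_cases hb0 : (k : ℕ) + 1 - i = 0
        · exact Or.inl hb0
        · refine Or.inr ⟨by omega, by omega, ?_⟩
          have h1 : (1 : ℤ) ≤ (i : ℤ) := by exact_mod_cast hi.1
          have : (((k : ℕ) + 1 + i : ℕ) : ℤ) * (((k : ℕ) + 1 - i : ℕ) : ℤ)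
              < (((k : ℕ) + 1 : ℕ) : ℤ) * (((k : ℕ) + 1 : ℕ) : ℤ) := by
            push_cast [Nat.cast_sub (show i ≤ (k : ℕ) + 1 by omega)]
            nlinarith
          exact_mod_cast this
      · rw [map_sum]
        apply Submodule.sum_mem
        intro r hr
        rw [map_sum]
        apply Submodule.sum_mem
        intro s hs
        rw [Finset.mem_Icc] at hr
        rw [Finset.mem_range] at hs
        rw [mk_C_mul]
        apply Submodule.smul_mem
        apply hstep _ _ (by omega)
        by_cases hs0 : s = 0
        · exact Or.inl hs0
        · refine Or.inr ⟨by omega, by omega, ?_⟩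
          have h1 : (1 : ℤ) ≤ (s : ℤ) := by exact_mod_cast Nat.one_le_iff_ne_zero.2 hs0
          have h2 : (r : ℤ) + s + 1 ≤ 2 * ((k : ℤ) + 1) := by
            exact_mod_cast (show ((r + s + 1 : ℕ) : ℤ) ≤ ((2 * ((k : ℕ) + 1) : ℕ) : ℤ)
              from by exact_mod_cast (by omega : r + s + 1 ≤ 2 * ((k : ℕ) + 1)))
          have h3 : ((k : ℤ) + 1) ≤ r := by exact_mod_cast hr.1
          have : (r : ℤ) * s < ((k : ℤ) + 1) * ((k : ℤ) + 1) := by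
            nlinarith [mul_nonneg (by linarith : (0 : ℤ) ≤ 2 * ((k : ℤ) + 1) - 1 - s - r)
              (by linarith : (0 : ℤ) ≤ (s : ℤ)), sq_nonneg ((k : ℤ) + 1 - s)]
          exact_mod_cast this
  rw [eq_top_iff]
  intro x _
  obtain ⟨p, rfl⟩ := Ideal.Quotient.mk_surjective x
  rw [← MvPolynomial.support_sum_monomial_coeff p, map_sum]
  apply Submodule.sum_mem
  intro d hd
  rw [MvPolynomial.monomial_eq]
  have hprod : (d.prod fun i e => (MvPolynomial.X i : PRing n) ^ e) = Xmon n d := by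
    rw [Finsupp.prod_fintype _ _ (fun i => pow_zero _)]; rfl
  rw [hprod, mk_C_mul]
  exact Submodule.smul_mem _ _ (key d)

end
end

section
/- R_n is a free module over S = ℤ[x_1,…,x_n] with basis the monomials X^λ for λ ∈ SP_n; in particular R_n is a free S-module of rank 2^n. -/
open Finset

noncomputable section

namespace SMB
open MvPolynomial

variable (n : ℕ)

/-- Concave weight on (1-based) variable indices. -/
def wt (j : ℕ) : ℕ := 2 * (n * n + n) * j - j * j

lemma wt_zero : wt n 0 = 0 := by simp [wt]

lemma wt_pos {j : ℕ} (h1 : 1 ≤ j) (h2 : j ≤ n) : 0 < wt n j := by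
  have : j * j < 2 * (n * n + n) * j := by nlinarith
  simp [wt]; omega

lemma wt_lt {a b k : ℕ} (hk1 : 1 ≤ k) (hkn : k ≤ n) (han : a ≤ n) (hbk : b < k)
    (hka : k ≤ a) (hab : a + b ≤ 2 * k) : wt n a + wt n b < 2 * wt n k := by
  have ha : a * a ≤ 2 * (n * n + n) * a := by nlinarith
  have hb : b * b ≤ 2 * (n * n + n) * b := by nlinarith
  have hkk : k * k ≤ 2 * (n * n + n) * k := by nlinarith
  simp only [wt]
  zify [ha, hb, hkk]
  rcases Nat.lt_or_ge (a + b) (2 * k) with h | h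
  · have h2 : (a : ℤ) + b + 1 ≤ 2 * k := by exact_mod_cast h
    nlinarith [sq_nonneg ((a : ℤ) - k), sq_nonneg ((b : ℤ) - k), sq_nonneg ((a:ℤ) + b - 2*k)]
  · have h2 : (a : ℤ) + b = 2 * k := by omega
    have h3 : (b : ℤ) + 1 ≤ k := by exact_mod_cast hbk
    nlinarith [sq_nonneg ((a : ℤ) - b)]

/-- The weight of an exponent vector. -/
def Om (e : Fin n →₀ ℕ) : ℕ := e.sum fun i c => wt n ((i : ℕ) + 1) * c

lemma Om_add (a b : Fin n →₀ ℕ) : Om n (a + b) = Om n a + Om n b := by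
  classical
  exact Finsupp.sum_add_index' (fun i => by simp) (fun i x y => by ring)

lemma Om_single (i : Fin n) (c : ℕ) : Om n (Finsupp.single i c) = wt n ((i : ℕ) + 1) * c := by
  classical
  exact Finsupp.sum_single_index (by simp)

lemma sub_add_single_cancel {e : Fin n →₀ ℕ} {j : Fin n} (h : 2 ≤ e j) :
    e - Finsupp.single j 2 + Finsupp.single j 2 = e := by
  classical
  ext i
  rcases eq_or_ne i j with rfl | hij
  · simp [Finsupp.tsub_apply]; omega
  · simp [Finsupp.tsub_apply, Finsupp.single_apply, Ne.symm hij, hij]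

lemma Om_sub_single {e : Fin n →₀ ℕ} {j : Fin n} (h : 2 ≤ e j) :
    Om n (e - Finsupp.single j 2) + 2 * wt n ((j : ℕ) + 1) = Om n e := by
  classical
  conv_rhs => rw [← sub_add_single_cancel n h]
  rw [Om_add, Om_single]; ring




/-- Exponent vector of `X_a` (`a` 1-based; `0` for `X_0 = 1`). -/
def ee (a : ℕ) : Fin n →₀ ℕ :=
  if h : 1 ≤ a ∧ a ≤ n then Finsupp.single (⟨a - 1, by omega⟩ : Fin n) 1 else 0

lemma XV_eq_monomial {a : ℕ} (ha : a ≤ n) : XV n a = monomial (ee n a) 1 := by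
  rcases Nat.eq_zero_or_pos a with rfl | h1
  · simp [XV, ee]
  · rw [XV, dif_neg (by omega), dif_pos ha, ee, dif_pos ⟨h1, ha⟩]
    rw [MvPolynomial.X]

lemma Om_ee {a : ℕ} (ha : a ≤ n) : Om n (ee n a) = wt n a := by
  rcases Nat.eq_zero_or_pos a with rfl | h1
  · simp [ee, Om, wt_zero]
  · rw [ee, dif_pos ⟨h1, ha⟩, Om_single]
    have h2 : a - 1 + 1 = a := by omega
    simp [h2]

lemma supp_term (c : Sring n) {a b : ℕ} (ha : a ≤ n) (hb : b ≤ n) :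
    (C c * XV n a * XV n b).support ⊆ {ee n a + ee n b} := by
  rw [XV_eq_monomial n ha, XV_eq_monomial n hb]
  rw [MvPolynomial.C_apply, monomial_mul, monomial_mul]
  refine (support_monomial_subset).trans ?_
  simp




/-- The "tail" of the relation: `XKK n (j+1) = X_j² - gk j`. -/
def gk (j : Fin n) : PRing n := XV n ((j : ℕ) + 1) ^ 2 - XKK n ((j : ℕ) + 1)

lemma ee_succ (j : Fin n) : ee n ((j : ℕ) + 1) = Finsupp.single j 1 := by
  have h : 1 ≤ (j : ℕ) + 1 ∧ (j : ℕ) + 1 ≤ n := ⟨Nat.le_add_left 1 _, j.isLt⟩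
  rw [ee, dif_pos h]
  congr 1

lemma XV_sq (j : Fin n) :
    XV n ((j : ℕ) + 1) ^ 2 = monomial (Finsupp.single j 2) 1 := by
  rw [XV_eq_monomial n j.isLt, ee_succ, sq, monomial_mul]
  congr 1
  · rw [← Finsupp.single_add]
  · norm_num

lemma XKK_eq (j : Fin n) :
    XKK n ((j : ℕ) + 1) = monomial (Finsupp.single j 2) 1 - gk n j := by
  rw [gk, XV_sq]; ring

lemma gk_supp {j : Fin n} {m : Fin n →₀ ℕ} (hm : m ∈ (gk n j).support) :
    Om n m < 2 * wt n ((j : ℕ) + 1) := by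
  classical
  set k := (j : ℕ) + 1 with hkdef
  have hk1 : 1 ≤ k := Nat.le_add_left 1 _
  have hkn : k ≤ n := j.isLt
  -- rewrite gk as a negated sum of nice terms
  have hgk : gk n j =
      -((∑ i ∈ Icc 1 (min (n - k) k), C ((2 : Sring n) * (-1) ^ i) * XV n (k + i) * XV n (k - i))
        + ∑ r ∈ Icc k (min n (2 * k - 1)), ∑ s ∈ range (2 * k - 1 - r + 1),
            C (iotaA n (fco k k r s)) * XV n r * XV n s) := by
    have e1 : ∀ i : ℕ, C ((2 : Sring n) * (-1) ^ i) * XV n (k + i) * XV n (k - i)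
        = 2 * ((-1) ^ i * XV n (k + i) * XV n (k - i)) := by
      intro i
      rw [map_mul, map_pow, map_neg, map_one, map_ofNat]
      ring
    rw [Finset.sum_congr rfl fun i _ => e1 i, ← Finset.mul_sum]
    rw [gk, XKK]
    ring
  rw [hgk, support_neg] at hm
  have hm2 := MvPolynomial.support_add hm
  have main : ∀ a b : ℕ, a ≤ n → b ≤ n → b < k → k ≤ a → a + b ≤ 2 * k →
      ∀ c : Sring n, m ∈ (C c * XV n a * XV n b).support → Om n m < 2 * wt n k := by
    intro a b ha hb hbk hka hab c hmem
    have := supp_term n c ha hb hmem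
    rw [Finset.mem_singleton] at this
    subst this
    rw [Om_add, Om_ee n ha, Om_ee n hb]
    exact wt_lt n hk1 hkn ha hbk hka hab
  rcases Finset.mem_union.mp hm2 with h | h
  · obtain ⟨i, hi, hmi⟩ := Finset.mem_biUnion.mp (MvPolynomial.support_sum h)
    rw [Finset.mem_Icc] at hi
    refine main (k + i) (k - i) (by omega) (by omega) (by omega) (by omega) (by omega) _ hmi
  · obtain ⟨r, hr, hmr⟩ := Finset.mem_biUnion.mp (MvPolynomial.support_sum h)
    obtain ⟨s, hs, hms⟩ := Finset.mem_biUnion.mp (MvPolynomial.support_sum hmr)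
    rw [Finset.mem_Icc] at hr
    rw [Finset.mem_range] at hs
    refine main r s (by omega) (by omega) (by omega) (by omega) (by omega) _ hms



/-- Normal form of a monomial exponent, with fuel. -/
def Nf : ℕ → (Fin n →₀ ℕ) → PRing n
  | 0, _ => 0
  | fuel + 1, e =>
    if h : ∃ i, 2 ≤ e i then
      (gk n h.choose).support.sum fun m =>
        MvPolynomial.coeff m (gk n h.choose) •
          Nf fuel (e - Finsupp.single h.choose 2 + m)
    else monomial e 1

lemma Om_step {e : Fin n →₀ ℕ} {j : Fin n} (hj : 2 ≤ e j) {m : Fin n →₀ ℕ}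
    (hm : m ∈ (gk n j).support) :
    Om n (e - Finsupp.single j 2 + m) < Om n e := by
  have h1 := Om_sub_single n hj
  have h2 := gk_supp n hm
  rw [Om_add]
  omega

lemma Om_pos {e : Fin n →₀ ℕ} {j : Fin n} (hj : 2 ≤ e j) : 0 < Om n e := by
  have h1 := Om_sub_single n hj
  have h2 : 0 < wt n ((j : ℕ) + 1) := wt_pos n (Nat.le_add_left 1 _) j.isLt
  omega

lemma Nf_congr : ∀ f1 : ℕ, ∀ f2 : ℕ, ∀ e : Fin n →₀ ℕ, Om n e < f1 → Om n e < f2 →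
    Nf n f1 e = Nf n f2 e := by
  intro f1
  induction f1 using Nat.strong_induction_on with
  | _ f1 ih =>
    intro f2 e h1 h2
    match f1, f2 with
    | f1 + 1, f2 + 1 =>
      rw [Nf, Nf]
      split
      · rename_i h
        refine Finset.sum_congr rfl fun m hm => ?_
        have hlt := Om_step n h.choose_spec hm
        congr 1
        refine ih f1 (by omega) f2 _ (by omega) (by omega)
      · rfl

/-- The normal form of a monomial exponent. -/
def NN (e : Fin n →₀ ℕ) : PRing n := Nf n (Om n e + 1) e

lemma NN_irred {e : Fin n →₀ ℕ} (h : ¬ ∃ i, 2 ≤ e i) : NN n e = monomial e 1 := by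
  rw [NN, Nf, dif_neg h]

lemma NN_unfold {e : Fin n →₀ ℕ} (h : ∃ i, 2 ≤ e i) :
    NN n e = (gk n h.choose).support.sum fun m =>
      MvPolynomial.coeff m (gk n h.choose) • NN n (e - Finsupp.single h.choose 2 + m) := by
  rw [NN, Nf, dif_pos h]
  refine Finset.sum_congr rfl fun m hm => ?_
  congr 1
  exact Nf_congr n _ _ _ (Om_step n h.choose_spec hm) (Nat.lt_succ_self _)


lemma NN_key (e : Fin n →₀ ℕ) (j : Fin n) :
    NN n (e + Finsupp.single j 2) = (gk n j).support.sum fun m =>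
      MvPolynomial.coeff m (gk n j) • NN n (e + m) := by
  classical
  suffices H : ∀ N : ℕ, ∀ (e : Fin n →₀ ℕ) (j : Fin n), Om n (e + Finsupp.single j 2) ≤ N →
      NN n (e + Finsupp.single j 2) = (gk n j).support.sum fun m =>
        MvPolynomial.coeff m (gk n j) • NN n (e + m) by
    exact H _ e j le_rfl
  intro N
  induction N using Nat.strong_induction_on with
  | _ N ih =>
    intro e j hN
    have hjmem : 2 ≤ (e + Finsupp.single j 2 : Fin n →₀ ℕ) j := by
      simp [Finsupp.add_apply, Finsupp.single_eq_same]
    have h : ∃ i, 2 ≤ (e + Finsupp.single j 2 : Fin n →₀ ℕ) i := ⟨j, hjmem⟩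
    rw [NN_unfold n h]
    have hch : 2 ≤ (e + Finsupp.single j 2 : Fin n →₀ ℕ) h.choose := h.choose_spec
    set j₀ := h.choose with hj₀def
    have hsplitJ : Om n (e + Finsupp.single j 2) = Om n e + 2 * wt n ((j : ℕ) + 1) := by
      rw [Om_add, Om_single]; ring
    by_cases hjj : j₀ = j
    · refine Finset.sum_congr (by rw [hjj]) fun m hm => ?_
      rw [hjj, add_tsub_cancel_right]
    · have hj₀e : 2 ≤ e j₀ := by
        rwa [Finsupp.add_apply, Finsupp.single_apply, if_neg (fun hh => hjj hh.symm),
          add_zero] at hch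
      have lhs_eq : ((gk n j₀).support.sum fun m =>
          MvPolynomial.coeff m (gk n j₀) •
            NN n (e + Finsupp.single j 2 - Finsupp.single j₀ 2 + m))
          = (gk n j₀).support.sum fun m => (gk n j).support.sum fun m' =>
              (MvPolynomial.coeff m (gk n j₀) * MvPolynomial.coeff m' (gk n j)) •
                NN n (e - Finsupp.single j₀ 2 + m + m') := by
        refine Finset.sum_congr rfl fun m hm => ?_
        have id1 : e + Finsupp.single j 2 - Finsupp.single j₀ 2 + m
            = (e - Finsupp.single j₀ 2 + m) + Finsupp.single j 2 := by
          ext i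
          simp only [Finsupp.add_apply, Finsupp.tsub_apply]
          rcases eq_or_ne i j₀ with rfl | hi0
          · rw [Finsupp.single_eq_same, Finsupp.single_apply, if_neg (fun hh => hjj hh.symm)]
            omega
          · rw [Finsupp.single_eq_of_ne' (fun hh => hi0 hh.symm)]
            omega
        have h1 : Om n (e - Finsupp.single j₀ 2 + m) < Om n e := Om_step n hj₀e hm
        have h2 : Om n ((e - Finsupp.single j₀ 2 + m) + Finsupp.single j 2)
            = Om n (e - Finsupp.single j₀ 2 + m) + 2 * wt n ((j : ℕ) + 1) := by
          rw [Om_add, Om_single]; ring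
        rw [id1, ih (Om n ((e - Finsupp.single j₀ 2 + m) + Finsupp.single j 2))
          (by omega) _ _ le_rfl]
        rw [Finset.smul_sum]
        exact Finset.sum_congr rfl fun m' hm' => by rw [smul_smul]
      rw [lhs_eq]
      have rhs_eq : ((gk n j).support.sum fun m' =>
          MvPolynomial.coeff m' (gk n j) • NN n (e + m'))
          = (gk n j).support.sum fun m' => (gk n j₀).support.sum fun m =>
              (MvPolynomial.coeff m' (gk n j) * MvPolynomial.coeff m (gk n j₀)) •
                NN n (e - Finsupp.single j₀ 2 + m' + m) := by
        refine Finset.sum_congr rfl fun m' hm' => ?_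
        have id2 : e + m' = (e - Finsupp.single j₀ 2 + m') + Finsupp.single j₀ 2 := by
          ext i
          simp only [Finsupp.add_apply, Finsupp.tsub_apply]
          rcases eq_or_ne i j₀ with rfl | hi0
          · rw [Finsupp.single_eq_same]
            omega
          · rw [Finsupp.single_eq_of_ne' (fun hh => hi0 hh.symm)]
            omega
        have hOm' : Om n ((e - Finsupp.single j₀ 2 + m') + Finsupp.single j₀ 2) < N := by
          rw [← id2, Om_add]
          have h3 := gk_supp n hm'
          omega
        rw [id2, ih (Om n ((e - Finsupp.single j₀ 2 + m') + Finsupp.single j₀ 2))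
          hOm' _ _ le_rfl]
        rw [Finset.smul_sum]
        exact Finset.sum_congr rfl fun m hm => by rw [smul_smul]
      rw [rhs_eq, Finset.sum_comm]
      refine Finset.sum_congr rfl fun m hm => Finset.sum_congr rfl fun m' hm' => ?_
      rw [mul_comm, add_right_comm]

/-- The normal form map. -/
def NF (p : PRing n) : PRing n :=
  p.support.sum fun e => MvPolynomial.coeff e p • NN n e

lemma NF_superset {p : PRing n} {s : Finset (Fin n →₀ ℕ)} (hs : p.support ⊆ s) :
    NF n p = s.sum fun e => MvPolynomial.coeff e p • NN n e := by
  refine Finset.sum_subset hs fun e _ he => ?_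
  rw [MvPolynomial.notMem_support_iff.mp he, zero_smul]

lemma NF_zero : NF n 0 = 0 := by
  simp [NF]

lemma NF_add (p q : PRing n) : NF n (p + q) = NF n p + NF n q := by
  classical
  rw [NF_superset n (s := p.support ∪ q.support)
      ((MvPolynomial.support_add (p := p) (q := q)).trans le_rfl),
    NF_superset n (s := p.support ∪ q.support) Finset.subset_union_left,
    NF_superset n (s := p.support ∪ q.support) Finset.subset_union_right,
    ← Finset.sum_add_distrib]
  refine Finset.sum_congr rfl fun e _ => ?_
  rw [MvPolynomial.coeff_add, add_smul]

lemma NF_smul (c : Sring n) (p : PRing n) : NF n (c • p) = c • NF n p := by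
  classical
  rw [NF_superset n (s := p.support) MvPolynomial.support_smul, NF, Finset.smul_sum]
  refine Finset.sum_congr rfl fun e _ => ?_
  rw [MvPolynomial.coeff_smul, smul_eq_mul, mul_smul]

lemma NF_sum {α : Type*} (s : Finset α) (f : α → PRing n) :
    NF n (s.sum f) = s.sum fun a => NF n (f a) := by
  classical
  induction s using Finset.induction_on with
  | empty => simp [NF_zero]
  | insert a s' hx ih =>
                    rw [Finset.sum_insert hx, NF_add, ih, Finset.sum_insert hx]

lemma NF_monomial (e : Fin n →₀ ℕ) (c : Sring n) :
    NF n (monomial e c) = c • NN n e := by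
  classical
  rcases eq_or_ne c 0 with rfl | hc
  · simp [NF_zero, zero_smul]
  · rw [NF, support_monomial, if_neg hc, Finset.sum_singleton, coeff_monomial, if_pos rfl]

lemma monomial_mul_XKK (d : Fin n →₀ ℕ) (c : Sring n) (j : Fin n) :
    monomial d c * XKK n ((j : ℕ) + 1) = monomial (d + Finsupp.single j 2) c
      - (gk n j).support.sum fun m => monomial (d + m) (c * MvPolynomial.coeff m (gk n j)) := by
  rw [XKK_eq, mul_sub, monomial_mul, mul_one]
  congr 1
  conv_lhs => rw [MvPolynomial.as_sum (gk n j), Finset.mul_sum]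
  exact Finset.sum_congr rfl fun m _ => by rw [monomial_mul]

lemma NF_monomial_mul_XKK (d : Fin n →₀ ℕ) (c : Sring n) (j : Fin n) :
    NF n (monomial d c * XKK n ((j : ℕ) + 1)) = 0 := by
  rw [monomial_mul_XKK, sub_eq_add_neg, NF_add, NF_monomial]
  have hneg : (-((gk n j).support.sum fun m =>
      monomial (d + m) (c * MvPolynomial.coeff m (gk n j))) : PRing n)
      = (-1 : Sring n) • ((gk n j).support.sum fun m =>
        monomial (d + m) (c * MvPolynomial.coeff m (gk n j))) := by
    rw [neg_one_smul]
  rw [hneg, NF_smul, NF_sum, NN_key]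
  rw [Finset.smul_sum, Finset.smul_sum]
  rw [← Finset.sum_add_distrib]
  refine Finset.sum_eq_zero fun m hm => ?_
  have hc : (c * MvPolynomial.coeff m (gk n j)) + (-1 * (c * MvPolynomial.coeff m (gk n j)))
      = 0 := by ring
  rw [NF_monomial, smul_smul, smul_smul, ← add_smul, hc, zero_smul]

lemma XKK_mem_Irel (j : Fin n) : XKK n ((j : ℕ) + 1) ∈ Irel n := by
  refine Ideal.subset_span ⟨(j : ℕ) + 1, ?_, rfl⟩
  exact Set.mem_Icc.mpr ⟨Nat.le_add_left 1 _, j.isLt⟩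

lemma NF_mul_XKK (r : PRing n) (j : Fin n) : NF n (r * XKK n ((j : ℕ) + 1)) = 0 := by
  conv_lhs => rw [MvPolynomial.as_sum r, Finset.sum_mul, NF_sum]
  exact Finset.sum_eq_zero fun d _ => NF_monomial_mul_XKK n d _ j

lemma NF_eq_zero_of_mem {p : PRing n} (hp : p ∈ Irel n) : NF n p = 0 := by
  have main : ∀ r : PRing n, NF n (r * p) = 0 := by
    refine Submodule.span_induction (p := fun x _ => ∀ r : PRing n, NF n (r * x) = 0)
      ?_ ?_ ?_ ?_ hp
    · rintro x ⟨k, hk, rfl⟩ r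
      rw [Set.mem_Icc] at hk
      have hj : k = ((⟨k - 1, by omega⟩ : Fin n) : ℕ) + 1 := by simp; omega
      rw [hj]
      exact NF_mul_XKK n r _
    · intro r
      rw [mul_zero, NF_zero]
    · intro x y hx hy ihx ihy r
      rw [mul_add, NF_add, ihx, ihy, add_zero]
    · intro a x hx ihx r
      rw [smul_eq_mul, ← mul_assoc]
      exact ihx (r * a)
  simpa using main 1

lemma monomial_sub_NN_mem (e : Fin n →₀ ℕ) :
    monomial e 1 - NN n e ∈ Irel n := by
  classical
  suffices H : ∀ N : ℕ, ∀ e : Fin n →₀ ℕ, Om n e ≤ N → monomial e 1 - NN n e ∈ Irel n by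
    exact H _ e le_rfl
  intro N
  induction N using Nat.strong_induction_on with
  | _ N ih =>
    intro e hN
    by_cases h : ∃ i, 2 ≤ e i
    · rw [NN_unfold n h]
      set j₀ := h.choose with hj₀def
      have hj₀ : 2 ≤ e j₀ := h.choose_spec
      set d := e - Finsupp.single j₀ 2 with hd
      have hde : d + Finsupp.single j₀ 2 = e := sub_add_single_cancel n hj₀
      have heq : monomial e 1 - ((gk n j₀).support.sum fun m =>
          MvPolynomial.coeff m (gk n j₀) • NN n (d + m))
          = monomial d 1 * XKK n ((j₀ : ℕ) + 1)
            + (gk n j₀).support.sum fun m =>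
                MvPolynomial.coeff m (gk n j₀) • (monomial (d + m) 1 - NN n (d + m)) := by
        rw [monomial_mul_XKK, hde]
        rw [Finset.sum_congr rfl fun m (_ : m ∈ (gk n j₀).support) =>
          smul_sub (MvPolynomial.coeff m (gk n j₀)) (monomial (d + m) 1) (NN n (d + m))]
        rw [Finset.sum_sub_distrib]
        have : ∀ m, MvPolynomial.coeff m (gk n j₀) • (monomial (d + m) 1 : PRing n)
            = monomial (d + m) (1 * MvPolynomial.coeff m (gk n j₀)) := by
          intro m
          rw [MvPolynomial.smul_monomial, smul_eq_mul, mul_comm]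
        rw [Finset.sum_congr rfl fun m _ => this m]
        abel
      rw [heq]
      refine Submodule.add_mem _ (Ideal.mul_mem_left _ _ (XKK_mem_Irel n j₀)) ?_
      refine Submodule.sum_mem _ fun m hm => ?_
      rw [MvPolynomial.smul_eq_C_mul]
      refine Ideal.mul_mem_left _ _ ?_
      have hlt : Om n (d + m) < Om n e := Om_step n hj₀ hm
      exact ih (Om n (d + m)) (by omega) _ le_rfl
    · rw [NN_irred n h, sub_self]
      exact Submodule.zero_mem _

/-- Squarefree exponent vector attached to a subset of the variables. -/
def sqf (μ : Fin n → Bool) : Fin n →₀ ℕ :=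
  Finsupp.equivFunOnFinite.symm fun i => if μ i then 1 else 0

lemma sqf_apply (μ : Fin n → Bool) (i : Fin n) : sqf n μ i = if μ i then 1 else 0 := rfl

lemma sqf_inj : Function.Injective (sqf n) := by
  intro μ μ' hμ
  funext i
  have := congrArg (fun f => f i) hμ
  simp only [sqf_apply] at this
  cases hb : μ i <;> cases hb' : μ' i <;> simp [hb, hb'] at this ⊢

lemma Xmon_eq (μ : Fin n → Bool) :
    Xmon n (strictExp n μ) = monomial (sqf n μ) 1 := by
  classical
  rw [Xmon, ← MvPolynomial.prod_X_pow_eq_monomial]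
  rw [Finset.prod_subset (Finset.subset_univ (sqf n μ).support)
    (fun i _ hi => by rw [Finsupp.notMem_support_iff.mp hi, pow_zero])]
  refine Finset.prod_congr rfl fun i _ => ?_
  rw [sqf_apply, strictExp]

lemma NN_sqf (μ : Fin n → Bool) : NN n (sqf n μ) = monomial (sqf n μ) 1 := by
  refine NN_irred n ?_
  rintro ⟨i, hi⟩
  rw [sqf_apply] at hi
  split at hi <;> omega

/-- Quotient map as an `Sring`-algebra hom. -/
def qmap : PRing n →ₐ[Sring n] PRing n ⧸ Irel n :=
  Ideal.Quotient.mkₐ (Sring n) (Irel n)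

lemma q_NN_mem (e : Fin n →₀ ℕ) :
    qmap n (NN n e) ∈ Submodule.span (Sring n)
      (Set.range fun μ : Fin n → Bool => qmap n (monomial (sqf n μ) 1)) := by
  classical
  suffices H : ∀ N : ℕ, ∀ e : Fin n →₀ ℕ, Om n e ≤ N → qmap n (NN n e) ∈
      Submodule.span (Sring n)
        (Set.range fun μ : Fin n → Bool => qmap n (monomial (sqf n μ) 1)) by
    exact H _ e le_rfl
  intro N
  induction N using Nat.strong_induction_on with
  | _ N ih =>
    intro e hN
    by_cases h : ∃ i, 2 ≤ e i
    · rw [NN_unfold n h, map_sum]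
      refine Submodule.sum_mem _ fun m hm => ?_
      rw [map_smul]
      refine Submodule.smul_mem _ _ ?_
      have hlt : Om n (e - Finsupp.single h.choose 2 + m) < Om n e :=
        Om_step n h.choose_spec hm
      exact ih (Om n (e - Finsupp.single h.choose 2 + m)) (by omega) _ le_rfl
    · rw [NN_irred n h]
      have he : e = sqf n (fun i => decide (e i = 1)) := by
        ext i
        have hi : e i ≤ 1 := by
          by_contra hcon
          exact h ⟨i, by omega⟩
        rw [sqf_apply]
        rcases Nat.le_one_iff_eq_zero_or_eq_one.mp hi with h0 | h0 <;> simp [h0]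
      rw [he]
      exact Submodule.subset_span ⟨_, rfl⟩

lemma span_top :
    ⊤ ≤ Submodule.span (Sring n)
      (Set.range fun μ : Fin n → Bool => qmap n (monomial (sqf n μ) 1)) := by
  classical
  intro z _
  obtain ⟨p, rfl⟩ := Ideal.Quotient.mkₐ_surjective (Sring n) (I := Irel n) z
  show qmap n p ∈ _
  rw [MvPolynomial.as_sum p, map_sum]
  refine Submodule.sum_mem _ fun e he => ?_
  have hmon : (monomial e (MvPolynomial.coeff e p) : PRing n)
      = MvPolynomial.coeff e p • monomial e 1 := by
    rw [MvPolynomial.smul_monomial, smul_eq_mul, mul_one]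
  rw [hmon, map_smul]
  refine Submodule.smul_mem _ _ ?_
  have hq : qmap n (monomial e 1) = qmap n (NN n e) := by
    have h0 : qmap n (monomial e 1 - NN n e) = 0 := by
      rw [qmap, Ideal.Quotient.mkₐ_eq_mk, Ideal.Quotient.eq_zero_iff_mem]
      exact monomial_sub_NN_mem n e
    have := sub_eq_zero.mp (by rwa [map_sub] at h0)
    exact this
  rw [hq]
  exact q_NN_mem n e

lemma indep : LinearIndependent (Sring n)
    (fun μ : Fin n → Bool => qmap n (monomial (sqf n μ) 1)) := by
  classical
  rw [Fintype.linearIndependent_iff]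
  intro c hc μ₀
  set v : PRing n := ∑ μ : Fin n → Bool, c μ • monomial (sqf n μ) 1 with hv
  have h1 : qmap n v = 0 := by
    rw [hv, map_sum]
    simpa [map_smul] using hc
  have h2 : v ∈ Irel n := by
    rwa [qmap, Ideal.Quotient.mkₐ_eq_mk, Ideal.Quotient.eq_zero_iff_mem] at h1
  have h3 : NF n v = v := by
    rw [hv, NF_sum]
    refine Finset.sum_congr rfl fun μ _ => ?_
    rw [NF_smul, NF_monomial, one_smul, NN_sqf]
  have h4 : v = 0 := by rw [← h3, NF_eq_zero_of_mem n h2]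
  have h5 := congrArg (MvPolynomial.coeff (sqf n μ₀)) h4
  rw [hv, MvPolynomial.coeff_sum, MvPolynomial.coeff_zero] at h5
  rw [Finset.sum_eq_single μ₀ (fun μ _ hne => ?_) (fun habs => absurd (Finset.mem_univ _) habs)]
    at h5
  · rw [MvPolynomial.coeff_smul, MvPolynomial.coeff_monomial, if_pos rfl, smul_eq_mul,
      mul_one] at h5
    exact h5
  · rw [MvPolynomial.coeff_smul, MvPolynomial.coeff_monomial,
      if_neg (fun hh => hne (sqf_inj n hh)), smul_eq_mul, mul_zero]

end SMB

/-- `R_n = S[X_1,…,X_n]/I_n` is a free module over `S = ℤ[x_1,…,x_n]` with basis the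
monomials `X^λ` for `λ ∈ SP_n` (strict partitions, encoded by their sets of parts
`μ : Fin n → Bool`); in particular `R_n` is a free `S`-module of rank `2^n`. -/
theorem strict_monomials_basis (n : ℕ) (hn : 1 ≤ n) :
    (∃ b : Module.Basis (Fin n → Bool) (Sring n) (PRing n ⧸ Irel n),
      ∀ μ : Fin n → Bool,
        b μ = Ideal.Quotient.mk (Irel n) (Xmon n (strictExp n μ))) ∧
    Fintype.card (Fin n → Bool) = 2 ^ n := by
  constructor
  · refine ⟨Module.Basis.mk (SMB.indep n) (SMB.span_top n), fun μ => ?_⟩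
    rw [Module.Basis.mk_apply, SMB.Xmon_eq, SMB.qmap, Ideal.Quotient.mkₐ_eq_mk]
  · simp [Fintype.card_fun]

end
end
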